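/- Let X be a set equipped with two topologies τ⁺ and τ⁻. If the bitopological space (X, τ⁺, τ⁻) is compact and totally order-separated, then it is zero-dimensional: every τ⁺-open set is a union of sets that are τ⁺-open and τ⁻-closed, and every τ⁻-open set is a union of sets that are τ⁻-open and τ⁺-closed. -/

import Mathlib

open Set Topology

/-- The specialization preorder of a topology: `x ≤ y` iff every open set
containing `x` also contains `y`. -/
def SpecLE {X : Type*} (τ : TopologicalSpace X) (x y : X) : Prop :=
  ∀ U : Set X, IsOpen[τ] U → x ∈ U → y ∈ U

/-- A bitopological space is T0 if for any two distinct points there is a set,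
open in one of the two topologies, containing exactly one of them. -/
def BiT0 {X : Type*} (τp τm : TopologicalSpace X) : Prop :=
  ∀ x y : X, x ≠ y → ∃ U : Set X, (IsOpen[τp] U ∨ IsOpen[τm] U) ∧
    ((x ∈ U ∧ y ∉ U) ∨ (y ∈ U ∧ x ∉ U))

/-- A bitopological space is compact if every cover of `X` by sets, each open in
one of the two topologies, has a finite subcover. -/
def BiCompact {X : Type*} (τp τm : TopologicalSpace X) : Prop :=
  ∀ 𝒰 : Set (Set X), (∀ U ∈ 𝒰, IsOpen[τp] U ∨ IsOpen[τm] U) → ⋃₀ 𝒰 = univ →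
    ∃ ℱ ⊆ 𝒰, ℱ.Finite ∧ ⋃₀ ℱ = univ

/-- A bitopological space is zero-dimensional if every `τp`-open set is a union of
`τp`-open `τm`-closed sets, and symmetrically. -/
def BiZeroDim {X : Type*} (τp τm : TopologicalSpace X) : Prop :=
  (∀ U : Set X, IsOpen[τp] U → ∃ 𝒮 : Set (Set X),
      (∀ V ∈ 𝒮, IsOpen[τp] V ∧ IsClosed[τm] V) ∧ ⋃₀ 𝒮 = U) ∧
  (∀ U : Set X, IsOpen[τm] U → ∃ 𝒮 : Set (Set X),
      (∀ V ∈ 𝒮, IsOpen[τm] V ∧ IsClosed[τp] V) ∧ ⋃₀ 𝒮 = U)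

/-- `x ≤ y` iff `x ≤⁺ y` and `y ≤⁻ x`. -/
def BiLE {X : Type*} (τp τm : TopologicalSpace X) (x y : X) : Prop :=
  SpecLE τp x y ∧ SpecLE τm y x

/-- A bitopological space is totally order-separated if `BiLE` is a partial order and
whenever `¬ x ≤ y` there is a `τp`-open `τm`-closed set containing `x` but not `y`. -/
def TotOrdSep {X : Type*} (τp τm : TopologicalSpace X) : Prop :=
  ((∀ x : X, BiLE τp τm x x) ∧
   (∀ x y z : X, BiLE τp τm x y → BiLE τp τm y z → BiLE τp τm x z) ∧
   (∀ x y : X, BiLE τp τm x y → BiLE τp τm y x → x = y)) ∧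
  (∀ x y : X, ¬ BiLE τp τm x y →
    ∃ U : Set X, IsOpen[τp] U ∧ IsClosed[τm] U ∧ x ∈ U ∧ y ∉ U)

lemma bi_aux {X : Type*} (τ σ : TopologicalSpace X) (hc : BiCompact τ σ)
    (U : Set X) (hU : IsOpen[τ] U) (x : X) (hx : x ∈ U)
    (hsep : ∀ y ∉ U, ∃ W : Set X, IsOpen[τ] W ∧ IsClosed[σ] W ∧ x ∈ W ∧ y ∉ W) :
    ∃ V : Set X, IsOpen[τ] V ∧ IsClosed[σ] V ∧ x ∈ V ∧ V ⊆ U := by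
  classical
  choose W hWo hWc hxW hyW using hsep
  set 𝒰 : Set (Set X) := insert U {F | ∃ y, ∃ hy : y ∉ U, F = (W y hy)ᶜ} with h𝒰
  have hopen : ∀ F ∈ 𝒰, IsOpen[τ] F ∨ IsOpen[σ] F := by
    rintro F (rfl | ⟨y, hy, rfl⟩)
    · exact Or.inl hU
    · exact Or.inr (hWc y hy).isOpen_compl
  have hcov : ⋃₀ 𝒰 = univ := by
    ext z
    simp only [mem_sUnion, mem_univ, iff_true]
    by_cases hz : z ∈ U
    · exact ⟨U, mem_insert _ _, hz⟩
    · exact ⟨(W z hz)ᶜ, Or.inr ⟨z, hz, rfl⟩, hyW z hz⟩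
  obtain ⟨ℱ, hℱ𝒰, hℱfin, hℱcov⟩ := hc 𝒰 hopen hcov
  have hform : ∀ F ∈ ℱ, F ≠ U → ∃ y, ∃ hy : y ∉ U, F = (W y hy)ᶜ := by
    intro F hF hFU
    rcases hℱ𝒰 hF with h | h
    · exact absurd h hFU
    · exact h
  refine ⟨⋂₀ (compl '' (ℱ \ {U})), ?_, ?_, ?_, ?_⟩
  · refine @Set.Finite.isOpen_sInter X τ _ ((hℱfin.diff).image _) ?_
    rintro _ ⟨F, ⟨hF, hFU⟩, rfl⟩
    obtain ⟨y, hy, rfl⟩ := hform F hF hFU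
    rw [compl_compl]; exact hWo y hy
  · refine @isClosed_sInter X σ _ ?_
    rintro _ ⟨F, ⟨hF, hFU⟩, rfl⟩
    obtain ⟨y, hy, rfl⟩ := hform F hF hFU
    rw [compl_compl]; exact hWc y hy
  · rintro _ ⟨F, ⟨hF, hFU⟩, rfl⟩
    obtain ⟨y, hy, rfl⟩ := hform F hF hFU
    rw [compl_compl]; exact hxW y hy
  · intro z hz
    have hzcov : z ∈ ⋃₀ ℱ := hℱcov ▸ mem_univ z
    obtain ⟨F, hF, hzF⟩ := hzcov
    by_cases hFU : F = U
    · exact hFU ▸ hzF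
    · obtain ⟨y, hy, rfl⟩ := hform F hF hFU
      exact absurd hzF (not_not.mpr (hz _ ⟨_, ⟨hF, hFU⟩, compl_compl _⟩))

/-- A compact and totally order-separated bitopological space is zero-dimensional. -/

theorem compact_totOrdSep_zeroDim {X : Type*} (τp τm : TopologicalSpace X)
    (hc : BiCompact τp τm) (hts : TotOrdSep τp τm) :
    BiZeroDim τp τm := by
  obtain ⟨-, hsep⟩ := hts
  have hc' : BiCompact τm τp := fun 𝒰 h hcov => hc 𝒰 (fun U hU => (h U hU).symm) hcov
  constructor
  · intro U hU
    refine ⟨{V | (IsOpen[τp] V ∧ IsClosed[τm] V) ∧ V ⊆ U}, fun V hV => hV.1, ?_⟩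
    refine Subset.antisymm (sUnion_subset fun V hV => hV.2) fun x hx => ?_
    have hsx : ∀ y ∉ U, ∃ W : Set X, IsOpen[τp] W ∧ IsClosed[τm] W ∧ x ∈ W ∧ y ∉ W :=
      fun y hy => hsep x y fun hle => hy (hle.1 U hU hx)
    obtain ⟨V, h1, h2, h3, h4⟩ := bi_aux τp τm hc U hU x hx hsx
    exact ⟨V, ⟨⟨h1, h2⟩, h4⟩, h3⟩
  · intro U hU
    refine ⟨{V | (IsOpen[τm] V ∧ IsClosed[τp] V) ∧ V ⊆ U}, fun V hV => hV.1, ?_⟩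
    refine Subset.antisymm (sUnion_subset fun V hV => hV.2) fun x hx => ?_
    have hsx : ∀ y ∉ U, ∃ W : Set X, IsOpen[τm] W ∧ IsClosed[τp] W ∧ x ∈ W ∧ y ∉ W := by
      intro y hy
      obtain ⟨W, hWo, hWc, hyW, hxW⟩ := hsep y x fun hle => hy (hle.2 U hU hx)
      exact ⟨Wᶜ, @IsClosed.isOpen_compl X τm W hWc, @IsOpen.isClosed_compl X τp W hWo, hxW, not_not.mpr hyW⟩
    obtain ⟨V, h1, h2, h3, h4⟩ := bi_aux τm τp hc' U hU x hx hsx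
    exact ⟨V, ⟨⟨h1, h2⟩, h4⟩, h3⟩
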